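/- Suppose Assumption A holds and let σ > 0. For each N, let g̃_N be the Stieltjes transform of a probability measure on ℝ satisfying the subordination equation g̃_N(z) = ∫ dμ_{A_N}(x) / (z − σ² g̃_N(z) − x) for all z ∈ ℂ⁺ (so g̃_N is the Stieltjes transform of the free convolution μ_σ ⊞ μ_{A_N}), and let g be the Stieltjes transform of a probability measure on ℝ satisfying g(z) = ∫ dν(x) / (z − σ² g(z) − x) for all z ∈ ℂ⁺ (so g is the Stieltjes transform of μ_σ ⊞ ν). Then there exist a polynomial T with nonnegative coefficients and a sequence (b_N) of positive numbers converging to 0 such that for all N and all z ∈ ℂ⁺, | g̃_N(z) − g(z) | ≤ T(|Im z|^{-1}) · b_N. -/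

import Mathlib

open MeasureTheory Filter Matrix Topology

/-- Eigenvalues of a Hermitian matrix in decreasing order (junk value `0` otherwise). -/
noncomputable def eigsDesc {N : ℕ} (A : Matrix (Fin N) (Fin N) ℂ) : Fin N → ℝ :=
  if h : A.IsHermitian then fun i => (h.eigenvalues ∘ Tuple.sort h.eigenvalues) i.rev
  else 0

/-- The (topological) support of a measure on `ℝ`. -/
def msupport (ν : Measure ℝ) : Set ℝ := {x | ∀ U ∈ nhds x, 0 < ν U}

namespace S15

lemma sub_ne {u : ℂ} (hu : 0 < u.im) (x : ℝ) : u - (x : ℂ) ≠ 0 := by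
  intro h
  have : (u - (x:ℂ)).im = 0 := by rw [h]; simp
  simp [Complex.sub_im] at this
  linarith

lemma abs_lb {u : ℂ} (hu : 0 < u.im) (x : ℝ) : u.im ≤ ‖u - (x:ℂ)‖ := by
  have h1 : (u - (x:ℂ)).im = u.im := by simp [Complex.sub_im]
  calc u.im = |(u - (x:ℂ)).im| := by rw [h1, abs_of_pos hu]
    _ ≤ ‖u - (x:ℂ)‖ := Complex.abs_im_le_norm _

lemma norm_inv_le {u : ℂ} (hu : 0 < u.im) (x : ℝ) : ‖(u - (x:ℂ))⁻¹‖ ≤ u.im⁻¹ := by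
  rw [norm_inv]
  exact inv_anti₀ hu (abs_lb hu x)

lemma cont_inv {u : ℂ} (hu : 0 < u.im) : Continuous fun x : ℝ => (u - (x:ℂ))⁻¹ :=
  ((continuous_const.sub Complex.continuous_ofReal).inv₀ (fun x => sub_ne hu x))

lemma integrable_of_bound (τ : Measure ℝ) [IsFiniteMeasure τ] {E : Type*} [NormedAddCommGroup E]
    {f : ℝ → E} (hf : Continuous f) (C : ℝ) (h : ∀ x, ‖f x‖ ≤ C) : Integrable f τ :=
  Integrable.mono' (integrable_const C) hf.aestronglyMeasurable (Eventually.of_forall h)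

lemma integrable_inv (τ : Measure ℝ) [IsFiniteMeasure τ] {u : ℂ} (hu : 0 < u.im) :
    Integrable (fun x : ℝ => (u - (x:ℂ))⁻¹) τ :=
  integrable_of_bound τ (cont_inv hu) u.im⁻¹ (norm_inv_le hu)

lemma norm_integral_inv_le (τ : Measure ℝ) [IsProbabilityMeasure τ] {u : ℂ} (hu : 0 < u.im) :
    ‖∫ x, (u - (x:ℂ))⁻¹ ∂τ‖ ≤ u.im⁻¹ := by
  have := norm_integral_le_of_norm_le_const (μ := τ) (f := fun x : ℝ => (u - (x:ℂ))⁻¹)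
    (C := u.im⁻¹) (Eventually.of_forall (norm_inv_le hu))
  simpa using this

lemma normSq_pos {u : ℂ} (hu : 0 < u.im) (x : ℝ) : 0 < Complex.normSq (u - (x:ℂ)) :=
  Complex.normSq_pos.2 (sub_ne hu x)

lemma inv_im_eq {u : ℂ} (hu : 0 < u.im) (x : ℝ) :
    ((u - (x:ℂ))⁻¹).im = -u.im * (Complex.normSq (u - (x:ℂ)))⁻¹ := by
  rw [Complex.inv_im]
  have : (u - (x:ℂ)).im = u.im := by simp [Complex.sub_im]
  rw [this]; ring

lemma integrable_normSq_inv (τ : Measure ℝ) [IsFiniteMeasure τ] {u : ℂ} (hu : 0 < u.im) :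
    Integrable (fun x : ℝ => (Complex.normSq (u - (x:ℂ)))⁻¹) τ := by
  apply integrable_of_bound τ (C := (u.im^2)⁻¹)
  · intro x
    rw [Real.norm_eq_abs, abs_of_nonneg (inv_nonneg.2 (Complex.normSq_nonneg _))]
    apply inv_anti₀ (by positivity)
    rw [Complex.normSq_eq_norm_sq]
    have := abs_lb hu x
    nlinarith [hu]
  · exact (Complex.continuous_normSq.comp (continuous_const.sub Complex.continuous_ofReal)).inv₀
      (fun x => (normSq_pos hu x).ne')

lemma im_integral (τ : Measure ℝ) [IsProbabilityMeasure τ] {u : ℂ} (hu : 0 < u.im) :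
    (∫ x, (u - (x:ℂ))⁻¹ ∂τ).im
      = -u.im * ∫ x, (Complex.normSq (u - (x:ℂ)))⁻¹ ∂τ := by
  have h1 : (∫ x, (u - (x:ℂ))⁻¹ ∂τ).im = ∫ x, ((u - (x:ℂ))⁻¹).im ∂τ := by
    rw [← Complex.imCLM_apply, ← ContinuousLinearMap.integral_comp_comm _ (integrable_inv τ hu)]
    rfl
  rw [h1]
  have : ∀ x : ℝ, ((u - (x:ℂ))⁻¹).im = -u.im * (Complex.normSq (u - (x:ℂ)))⁻¹ :=
    fun x => inv_im_eq hu x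
  rw [integral_congr_ae (Eventually.of_forall this)]
  rw [integral_const_mul]

lemma im_integral_nonpos (τ : Measure ℝ) [IsProbabilityMeasure τ] {u : ℂ} (hu : 0 < u.im) :
    (∫ x, (u - (x:ℂ))⁻¹ ∂τ).im ≤ 0 := by
  rw [im_integral τ hu]
  have : 0 ≤ ∫ x, (Complex.normSq (u - (x:ℂ)))⁻¹ ∂τ :=
    integral_nonneg (fun x => inv_nonneg.2 (Complex.normSq_nonneg _))
  nlinarith

variable {ν : Measure ℝ}

/-- error between empirical Stieltjes sum and `ν`-Stieltjes transform -/
noncomputable def eFun (lam : (N : ℕ) → Fin N → ℝ) (ν : Measure ℝ) (N : ℕ) (u : ℂ) : ℂ :=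
  (N:ℂ)⁻¹ * ∑ i, (u - (lam N i : ℂ))⁻¹ - ∫ x, (u - (x:ℂ))⁻¹ ∂ν

lemma norm_avg_le {N : ℕ} (f : Fin N → ℂ) (C : ℝ) (hC : 0 ≤ C) (h : ∀ i, ‖f i‖ ≤ C) :
    ‖(N:ℂ)⁻¹ * ∑ i, f i‖ ≤ C := by
  rw [norm_mul, norm_inv]
  have h1 : ‖∑ i, f i‖ ≤ (N : ℝ) * C := by
    calc ‖∑ i, f i‖ ≤ ∑ i : Fin N, C := norm_sum_le_of_le _ (fun i _ => h i)
      _ = (N : ℝ) * C := by simp [mul_comm]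
  have h2 : ‖(N : ℂ)‖ = (N : ℝ) := by simp
  rw [h2]
  rcases Nat.eq_zero_or_pos N with h0 | h0
  · simp [h0, hC]
  · have hN : (0:ℝ) < N := by exact_mod_cast h0
    calc ((N:ℝ))⁻¹ * ‖∑ i, f i‖ ≤ (N:ℝ)⁻¹ * ((N:ℝ) * C) := by
          apply mul_le_mul_of_nonneg_left h1 (by positivity)
      _ = C := by field_simp

lemma abs_eFun_le (lam : (N : ℕ) → Fin N → ℝ) (ν : Measure ℝ) [IsProbabilityMeasure ν]
    (N : ℕ) {u : ℂ} (hu : 0 < u.im) : ‖eFun lam ν N u‖ ≤ 2 * u.im⁻¹ := by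
  unfold eFun
  have h1 : ‖(N:ℂ)⁻¹ * ∑ i, (u - (lam N i : ℂ))⁻¹‖ ≤ u.im⁻¹ :=
    norm_avg_le _ _ (by positivity) (fun i => norm_inv_le hu _)
  have h2 := norm_integral_inv_le ν hu
  have := norm_sub_le ((N:ℂ)⁻¹ * ∑ i, (u - (lam N i : ℂ))⁻¹) (∫ x, (u - (x:ℂ))⁻¹ ∂ν)
  have h2' : ‖∫ x, (u - (x:ℂ))⁻¹ ∂ν‖ ≤ u.im⁻¹ := h2
  linarith

lemma inv_sub_inv_eq {a b : ℂ} (ha : a ≠ 0) (hb : b ≠ 0) :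
    a⁻¹ - b⁻¹ = (b - a) * (a * b)⁻¹ := by field_simp; try ring

lemma norm_ker_sub_ker {u v : ℂ} {ep : ℝ} (hep : 0 < ep) (hu : ep ≤ u.im) (hv : ep ≤ v.im)
    (y : ℝ) : ‖(u - (y:ℂ))⁻¹ - (v - (y:ℂ))⁻¹‖ ≤ (ep^2)⁻¹ * ‖u - v‖ := by
  have hu0 : 0 < u.im := lt_of_lt_of_le hep hu
  have hv0 : 0 < v.im := lt_of_lt_of_le hep hv
  rw [inv_sub_inv_eq (sub_ne hu0 y) (sub_ne hv0 y)]
  rw [norm_mul, norm_inv, norm_mul]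
  have h1 : ‖v - (y:ℂ) - (u - (y:ℂ))‖ = ‖u - v‖ := by
    rw [← norm_neg]; congr 1; ring
  have h2 : ep ≤ ‖u - (y:ℂ)‖ := le_trans hu (abs_lb hu0 y)
  have h3 : ep ≤ ‖v - (y:ℂ)‖ := le_trans hv (abs_lb hv0 y)
  have h4 : (‖u - (y:ℂ)‖ * ‖v - (y:ℂ)‖)⁻¹ ≤ (ep^2)⁻¹ := by
    apply inv_anti₀ (by positivity)
    calc ep^2 = ep * ep := sq ep
      _ ≤ _ := mul_le_mul h2 h3 hep.le (le_trans hep.le h2)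
  rw [h1]
  calc ‖u - v‖ * (‖u - (y:ℂ)‖ * ‖v - (y:ℂ)‖)⁻¹ ≤ ‖u - v‖ * (ep^2)⁻¹ :=
        mul_le_mul_of_nonneg_left h4 (norm_nonneg _)
    _ = (ep^2)⁻¹ * ‖u - v‖ := by ring

lemma eFun_sub_eFun (lam : (N : ℕ) → Fin N → ℝ) (ν : Measure ℝ) [IsProbabilityMeasure ν]
    (N : ℕ) {u v : ℂ} (hu : 0 < u.im) (hv : 0 < v.im) :
    eFun lam ν N u - eFun lam ν N v
      = (N:ℂ)⁻¹ * ∑ i, ((u - (lam N i : ℂ))⁻¹ - (v - (lam N i : ℂ))⁻¹)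
        - ∫ x, ((u - (x:ℂ))⁻¹ - (v - (x:ℂ))⁻¹) ∂ν := by
  unfold eFun
  rw [integral_sub (integrable_inv ν hu) (integrable_inv ν hv), Finset.sum_sub_distrib, mul_sub]
  ring

lemma eFun_lipschitz (lam : (N : ℕ) → Fin N → ℝ) (ν : Measure ℝ) [IsProbabilityMeasure ν]
    (N : ℕ) {u v : ℂ} {ep : ℝ} (hep : 0 < ep) (hu : ep ≤ u.im) (hv : ep ≤ v.im) :
    ‖eFun lam ν N u - eFun lam ν N v‖ ≤ 2 * (ep^2)⁻¹ * ‖u - v‖ := by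
  have hu0 : 0 < u.im := lt_of_lt_of_le hep hu
  have hv0 : 0 < v.im := lt_of_lt_of_le hep hv
  rw [eFun_sub_eFun lam ν N hu0 hv0]
  have h1 : ‖(N:ℂ)⁻¹ * ∑ i, ((u - (lam N i : ℂ))⁻¹ - (v - (lam N i : ℂ))⁻¹)‖
      ≤ (ep^2)⁻¹ * ‖u - v‖ :=
    norm_avg_le _ _ (by positivity) (fun i => norm_ker_sub_ker hep hu hv _)
  have h2 : ‖∫ x, ((u - (x:ℂ))⁻¹ - (v - (x:ℂ))⁻¹) ∂ν‖ ≤ (ep^2)⁻¹ * ‖u - v‖ := by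
    have := norm_integral_le_of_norm_le_const (μ := ν)
      (f := fun x : ℝ => (u - (x:ℂ))⁻¹ - (v - (x:ℂ))⁻¹) (C := (ep^2)⁻¹ * ‖u - v‖)
      (Eventually.of_forall (fun x => norm_ker_sub_ker hep hu hv x))
    simpa using this
  have := norm_sub_le ((N:ℂ)⁻¹ * ∑ i, ((u - (lam N i : ℂ))⁻¹ - (v - (lam N i : ℂ))⁻¹))
    (∫ x, ((u - (x:ℂ))⁻¹ - (v - (x:ℂ))⁻¹) ∂ν)
  linarith

lemma abs_eFun_moment (lam : (N : ℕ) → Fin N → ℝ) (ν : Measure ℝ) [IsProbabilityMeasure ν]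
    {N : ℕ} (hN : 1 ≤ N) {u : ℂ} (hu : 0 < u.im) {R du Du : ℝ} (hR : 0 ≤ R)
    (hdu : 0 < du) (hDu : 0 < Du)
    (hlam : ∀ i, |lam N i| ≤ R) (hν : ∀ᵐ x ∂ν, |x| ≤ R)
    (hd : ∀ y : ℝ, |y| ≤ R → du ≤ ‖u - (y:ℂ)‖) (hD : Du ≤ ‖u‖) :
    ‖eFun lam ν N u‖ ≤ 2 * R / (du * Du) := by
  have hune : u ≠ 0 := by
    intro h; rw [h] at hu; simp at hu
  have hNC : (N:ℂ) ≠ 0 := by exact_mod_cast Nat.one_le_iff_ne_zero.1 hN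
  have key : eFun lam ν N u
      = (N:ℂ)⁻¹ * ∑ i, ((u - (lam N i : ℂ))⁻¹ - u⁻¹)
        - ∫ x, ((u - (x:ℂ))⁻¹ - u⁻¹) ∂ν := by
    unfold eFun
    rw [integral_sub (integrable_inv ν hu) (integrable_const _), Finset.sum_sub_distrib, mul_sub]
    rw [Finset.sum_const, Finset.card_univ, Fintype.card_fin]
    rw [integral_const]
    simp [hNC, mul_comm]
  have hptw : ∀ y : ℝ, |y| ≤ R → ‖(u - (y:ℂ))⁻¹ - u⁻¹‖ ≤ R / (du * Du) := by
    intro y hy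
    have h0 : (u - (y:ℂ)) ≠ 0 := sub_ne hu y
    rw [inv_sub_inv_eq h0 hune]
    have he : u - (u - (y:ℂ)) = (y:ℂ) := by ring
    rw [he, norm_mul, norm_inv, norm_mul]
    have h1 : ‖(y:ℂ)‖ ≤ R := by rw [Complex.norm_real, Real.norm_eq_abs]; exact hy
    have h2 : (‖u - (y:ℂ)‖ * ‖u‖)⁻¹ ≤ (du * Du)⁻¹ := by
      apply inv_anti₀ (by positivity)
      exact mul_le_mul (hd y hy) hD hDu.le (norm_nonneg _)
    calc ‖(y:ℂ)‖ * (‖u - (y:ℂ)‖ * ‖u‖)⁻¹ ≤ R * (du * Du)⁻¹ :=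
          mul_le_mul h1 h2 (by positivity) hR
      _ = R / (du * Du) := by ring
  rw [key]
  have h1 : ‖(N:ℂ)⁻¹ * ∑ i, ((u - (lam N i : ℂ))⁻¹ - u⁻¹)‖ ≤ R / (du * Du) :=
    norm_avg_le _ _ (by positivity) (fun i => hptw _ (hlam i))
  have h2 : ‖∫ x, ((u - (x:ℂ))⁻¹ - u⁻¹) ∂ν‖ ≤ R / (du * Du) := by
    have := norm_integral_le_of_norm_le_const (μ := ν)
      (f := fun x : ℝ => (u - (x:ℂ))⁻¹ - u⁻¹) (C := R / (du * Du))
      (by filter_upwards [hν] with x hx using hptw x hx)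
    simpa using this
  have := norm_sub_le ((N:ℂ)⁻¹ * ∑ i, ((u - (lam N i : ℂ))⁻¹ - u⁻¹))
    (∫ x, ((u - (x:ℂ))⁻¹ - u⁻¹) ∂ν)
  have : ‖(N:ℂ)⁻¹ * ∑ i, ((u - (lam N i : ℂ))⁻¹ - u⁻¹) - ∫ x, ((u - (x:ℂ))⁻¹ - u⁻¹) ∂ν‖
      ≤ R / (du * Du) + R / (du * Du) := le_trans this (add_le_add h1 h2)
  calc ‖_ - _‖ ≤ R / (du * Du) + R / (du * Du) := this
    _ = 2 * R / (du * Du) := by ring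

noncomputable def bcfRe (v : ℂ) (hv : 0 < v.im) : BoundedContinuousFunction ℝ ℝ :=
  BoundedContinuousFunction.ofNormedAddCommGroup (fun x => ((v - (x:ℂ))⁻¹).re)
    (Complex.continuous_re.comp (cont_inv hv)) (v.im⁻¹)
    (fun x => le_trans (Complex.abs_re_le_norm ((v - (x:ℂ))⁻¹)) (norm_inv_le hv x))

noncomputable def bcfIm (v : ℂ) (hv : 0 < v.im) : BoundedContinuousFunction ℝ ℝ :=
  BoundedContinuousFunction.ofNormedAddCommGroup (fun x => ((v - (x:ℂ))⁻¹).im)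
    (Complex.continuous_im.comp (cont_inv hv)) (v.im⁻¹)
    (fun x => le_trans (Complex.abs_im_le_norm ((v - (x:ℂ))⁻¹)) (norm_inv_le hv x))

lemma eFun_eq_re_im (lam : (N : ℕ) → Fin N → ℝ) (ν : Measure ℝ) [IsProbabilityMeasure ν]
    (N : ℕ) {v : ℂ} (hv : 0 < v.im) :
    eFun lam ν N v
      = (((∑ i, (bcfRe v hv) (lam N i)) / N - ∫ x, (bcfRe v hv) x ∂ν : ℝ) : ℂ)
        + (((∑ i, (bcfIm v hv) (lam N i)) / N - ∫ x, (bcfIm v hv) x ∂ν : ℝ) : ℂ) * Complex.I := by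
  have hco : ∀ y : ℝ, (v - (y:ℂ))⁻¹
      = (((bcfRe v hv) y : ℝ) : ℂ) + (((bcfIm v hv) y : ℝ) : ℂ) * Complex.I := by
    intro y
    simp only [bcfRe, bcfIm, BoundedContinuousFunction.coe_ofNormedAddCommGroup]
    exact (Complex.re_add_im _).symm
  have hsum : ∑ i, (v - (lam N i : ℂ))⁻¹
      = ((∑ i, (bcfRe v hv) (lam N i) : ℝ) : ℂ) + ((∑ i, (bcfIm v hv) (lam N i) : ℝ) : ℂ) * Complex.I := by
    rw [Finset.sum_congr rfl (fun i _ => hco (lam N i))]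
    rw [Finset.sum_add_distrib, ← Finset.sum_mul]
    push_cast
    ring
  have hint : ∫ x, (v - (x:ℂ))⁻¹ ∂ν
      = ((∫ x, (bcfRe v hv) x ∂ν : ℝ) : ℂ) + ((∫ x, (bcfIm v hv) x ∂ν : ℝ) : ℂ) * Complex.I := by
    apply Complex.ext
    · have hR : ((((∫ x, (bcfRe v hv) x ∂ν : ℝ) : ℂ))
          + ((∫ x, (bcfIm v hv) x ∂ν : ℝ) : ℂ) * Complex.I).re = ∫ x, (bcfRe v hv) x ∂ν := by
        simp
      rw [hR, ← Complex.reCLM_apply, ← ContinuousLinearMap.integral_comp_comm _ (integrable_inv ν hv)]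
      apply integral_congr_ae
      refine Eventually.of_forall fun x => ?_
      simp [bcfRe, BoundedContinuousFunction.coe_ofNormedAddCommGroup]
    · have hI : ((((∫ x, (bcfRe v hv) x ∂ν : ℝ) : ℂ))
          + ((∫ x, (bcfIm v hv) x ∂ν : ℝ) : ℂ) * Complex.I).im = ∫ x, (bcfIm v hv) x ∂ν := by
        simp
      rw [hI, ← Complex.imCLM_apply, ← ContinuousLinearMap.integral_comp_comm _ (integrable_inv ν hv)]
      apply integral_congr_ae
      refine Eventually.of_forall fun x => ?_
      simp [bcfIm, BoundedContinuousFunction.coe_ofNormedAddCommGroup]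
  unfold eFun
  rw [hsum, hint]
  push_cast
  ring

lemma eFun_tendsto (lam : (N : ℕ) → Fin N → ℝ) (ν : Measure ℝ) [IsProbabilityMeasure ν]
    (hweak : ∀ f : BoundedContinuousFunction ℝ ℝ,
      Tendsto (fun N => (∑ i, f (lam N i)) / N) atTop (𝓝 (∫ x, f x ∂ν)))
    {v : ℂ} (hv : 0 < v.im) :
    Tendsto (fun N => ‖eFun lam ν N v‖) atTop (𝓝 0) := by
  have hre : Tendsto (fun N => (∑ i, (bcfRe v hv) (lam N i)) / N - ∫ x, (bcfRe v hv) x ∂ν)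
      atTop (𝓝 0) := by
    simpa using (hweak (bcfRe v hv)).sub_const (∫ x, (bcfRe v hv) x ∂ν)
  have him : Tendsto (fun N => (∑ i, (bcfIm v hv) (lam N i)) / N - ∫ x, (bcfIm v hv) x ∂ν)
      atTop (𝓝 0) := by
    simpa using (hweak (bcfIm v hv)).sub_const (∫ x, (bcfIm v hv) x ∂ν)
  have h1 : Tendsto (fun N => eFun lam ν N v) atTop (𝓝 0) := by
    have := ((Complex.continuous_ofReal.tendsto 0).comp hre).add
      (((Complex.continuous_ofReal.tendsto 0).comp him).mul_const Complex.I)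
    simp only [Function.comp_def, Complex.ofReal_zero, zero_add, zero_mul, add_zero] at this
    have heq : (fun N => (((∑ i, (bcfRe v hv) (lam N i)) / N - ∫ x, (bcfRe v hv) x ∂ν : ℝ) : ℂ)
        + (((∑ i, (bcfIm v hv) (lam N i)) / N - ∫ x, (bcfIm v hv) x ∂ν : ℝ) : ℂ) * Complex.I)
        = fun N => eFun lam ν N v := by
      funext N; rw [eFun_eq_re_im lam ν N hv]
    rwa [heq] at this
  have := h1.norm
  simpa using this

noncomputable def betaSeq (lam : (N : ℕ) → Fin N → ℝ) (ν : Measure ℝ) (N : ℕ) : ℝ :=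
  sSup {t | ∃ u : ℂ, 0 < u.im ∧ t = ‖eFun lam ν N u‖ * (u.im^2/(u.im+2))}

lemma eSet_elem_le (lam : (N : ℕ) → Fin N → ℝ) (ν : Measure ℝ) [IsProbabilityMeasure ν]
    (N : ℕ) {u : ℂ} (hu : 0 < u.im) :
    ‖eFun lam ν N u‖ * (u.im^2/(u.im+2)) ≤ 2 := by
  have h1 : ‖eFun lam ν N u‖ ≤ 2 * u.im⁻¹ := abs_eFun_le lam ν N hu
  have h2 : (0:ℝ) < u.im + 2 := by linarith
  have h3 : (0:ℝ) ≤ u.im^2/(u.im+2) := by positivity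
  calc ‖eFun lam ν N u‖ * (u.im^2/(u.im+2)) ≤ (2 * u.im⁻¹) * (u.im^2/(u.im+2)) :=
        mul_le_mul_of_nonneg_right h1 h3
    _ = 2 * u.im / (u.im + 2) := by field_simp
    _ ≤ 2 := by rw [div_le_iff₀ h2]; nlinarith

lemma bddAbove_eSet (lam : (N : ℕ) → Fin N → ℝ) (ν : Measure ℝ) [IsProbabilityMeasure ν]
    (N : ℕ) : BddAbove {t | ∃ u : ℂ, 0 < u.im ∧ t = ‖eFun lam ν N u‖ * (u.im^2/(u.im+2))} := by
  refine ⟨2, fun t ht => ?_⟩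
  obtain ⟨u, hu, rfl⟩ := ht
  exact eSet_elem_le lam ν N hu

lemma eSet_nonempty (lam : (N : ℕ) → Fin N → ℝ) (ν : Measure ℝ) (N : ℕ) :
    Set.Nonempty {t | ∃ u : ℂ, 0 < u.im ∧ t = ‖eFun lam ν N u‖ * (u.im^2/(u.im+2))} :=
  ⟨_, ⟨Complex.I, by simp, rfl⟩⟩

lemma betaSeq_nonneg (lam : (N : ℕ) → Fin N → ℝ) (ν : Measure ℝ) [IsProbabilityMeasure ν]
    (N : ℕ) : 0 ≤ betaSeq lam ν N := by
  have hm : ‖eFun lam ν N Complex.I‖ * ((Complex.I.im)^2/((Complex.I.im)+2))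
      ∈ {t | ∃ u : ℂ, 0 < u.im ∧ t = ‖eFun lam ν N u‖ * (u.im^2/(u.im+2))} :=
    ⟨Complex.I, by simp, rfl⟩
  refine le_trans ?_ (le_csSup (bddAbove_eSet lam ν N) hm)
  have : (0:ℝ) ≤ (Complex.I.im)^2/((Complex.I.im)+2) := by simp; norm_num
  positivity

lemma eFun_le_beta (lam : (N : ℕ) → Fin N → ℝ) (ν : Measure ℝ) [IsProbabilityMeasure ν]
    (N : ℕ) {u : ℂ} (hu : 0 < u.im) :
    ‖eFun lam ν N u‖ ≤ (u.im + 2)/u.im^2 * betaSeq lam ν N := by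
  have hm := le_csSup (bddAbove_eSet lam ν N)
    (⟨u, hu, rfl⟩ : ‖eFun lam ν N u‖ * (u.im^2/(u.im+2))
      ∈ {t | ∃ u : ℂ, 0 < u.im ∧ t = ‖eFun lam ν N u‖ * (u.im^2/(u.im+2))})
  have h2 : (0:ℝ) < u.im + 2 := by linarith
  have h3 : (0:ℝ) < u.im^2/(u.im+2) := by positivity
  have hb : ‖eFun lam ν N u‖ * (u.im^2/(u.im+2)) ≤ betaSeq lam ν N := hm
  have hgoal : ‖eFun lam ν N u‖
      = (‖eFun lam ν N u‖ * (u.im^2/(u.im+2))) * ((u.im + 2)/u.im^2) := by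
    field_simp
  rw [hgoal]
  calc (‖eFun lam ν N u‖ * (u.im^2/(u.im+2))) * ((u.im + 2)/u.im^2)
      ≤ betaSeq lam ν N * ((u.im + 2)/u.im^2) :=
        mul_le_mul_of_nonneg_right hb (by positivity)
    _ = (u.im + 2)/u.im^2 * betaSeq lam ν N := by ring

lemma msupport_compl_null (ν : Measure ℝ) : ν (msupport ν)ᶜ = 0 := by
  have hV : ∀ x ∈ (msupport ν)ᶜ, ∃ p q : ℚ, x ∈ Set.Ioo (p:ℝ) (q:ℝ) ∧ ν (Set.Ioo (p:ℝ) (q:ℝ)) = 0 := by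
    intro x hx
    simp only [msupport, Set.mem_compl_iff, Set.mem_setOf_eq, not_forall] at hx
    obtain ⟨U, hU, hU0⟩ := hx
    have hU0' : ν U = 0 := by
      by_contra h
      exact hU0 (pos_iff_ne_zero.2 h)
    obtain ⟨δ, hδ, hball⟩ := Metric.mem_nhds_iff.1 hU
    obtain ⟨p, hp1, hp2⟩ := exists_rat_btwn (show x - δ < x by linarith)
    obtain ⟨q, hq1, hq2⟩ := exists_rat_btwn (show x < x + δ by linarith)
    refine ⟨p, q, ⟨hp2, hq1⟩, ?_⟩
    have hsub : Set.Ioo (p:ℝ) (q:ℝ) ⊆ U := by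
      refine subset_trans ?_ hball
      rw [Real.ball_eq_Ioo]
      intro y hy
      exact ⟨by linarith [hy.1], by linarith [hy.2]⟩
    exact le_antisymm (le_trans (measure_mono hsub) (le_of_eq hU0')) zero_le
  have hsub : (msupport ν)ᶜ ⊆ ⋃ pq ∈ {pq : ℚ × ℚ | ν (Set.Ioo ((pq.1:ℝ)) ((pq.2:ℝ))) = 0},
      Set.Ioo ((pq.1:ℝ)) ((pq.2:ℝ)) := by
    intro x hx
    obtain ⟨p, q, hmem, h0⟩ := hV x hx
    exact Set.mem_biUnion (show (p,q) ∈ _ from h0) hmem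
  refine le_antisymm (le_trans (measure_mono hsub) (le_of_eq ?_)) zero_le
  exact (measure_biUnion_null_iff (Set.to_countable _)).2 (fun pq hpq => hpq)

lemma ae_bound_of_msupport (ν : Measure ℝ) {C : ℝ} (h : ∀ y ∈ msupport ν, |y| ≤ C) :
    ∀ᵐ x ∂ν, |x| ≤ C := by
  have h0 := msupport_compl_null ν
  rw [ae_iff]
  refine measure_mono_null ?_ h0
  intro x hx
  simp only [Set.mem_setOf_eq, not_le] at hx
  intro hmem
  exact absurd (h x hmem) (not_le.2 hx)

lemma abs_pos_of_im (u : ℂ) (hu : 0 < u.im) : u.im ≤ ‖u‖ := by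
  calc u.im = |u.im| := (abs_of_pos hu).symm
    _ ≤ ‖u‖ := Complex.abs_im_le_norm u

lemma beta_key (lam : (N : ℕ) → Fin N → ℝ) (ν : Measure ℝ) [IsProbabilityMeasure ν]
    (hweak : ∀ f : BoundedContinuousFunction ℝ ℝ,
      Tendsto (fun N => (∑ i, f (lam N i)) / N) atTop (𝓝 (∫ x, f x ∂ν)))
    {R : ℝ} (hR1 : 1 ≤ R) (hae : ∀ᵐ x ∂ν, |x| ≤ R)
    (hlam : ∀ᶠ N in atTop, ∀ i, |lam N i| ≤ R)
    {ε : ℝ} (hε : 0 < ε) (hε1 : ε ≤ 1) :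
    ∀ᶠ N in atTop, betaSeq lam ν N ≤ ε := by
  have hR0 : (0:ℝ) < R := by linarith
  set H : ℝ := 2*R/ε with hHdef
  have hH0 : 0 < H := by positivity
  have hH2 : 2*R ≤ H := by
    rw [hHdef, le_div_iff₀ hε]; nlinarith
  set R2 : ℝ := R + 2*R/ε with hR2def
  have hR2R : R2 - R = 2*R/ε := by rw [hR2def]; ring
  have hR20 : 0 < R2 := by positivity
  have hHR2 : H ≤ R2 := by rw [hHdef, hR2def]; nlinarith
  set ε₁ : ℝ := ε/H with hε₁def
  have hε₁0 : 0 < ε₁ := by positivity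
  set δ : ℝ := ε₁ * ε^2/4 with hδdef
  have hδ0 : 0 < δ := by positivity
  set B : Set ℂ := {u : ℂ | |u.re| ≤ R2 ∧ ε ≤ u.im ∧ u.im ≤ H} with hBdef
  have hBc : IsCompact B := by
    apply Metric.isCompact_of_isClosed_isBounded
    · have h1 : IsClosed {u : ℂ | |u.re| ≤ R2} :=
        isClosed_le (continuous_abs.comp Complex.continuous_re) continuous_const
      have h2 : IsClosed {u : ℂ | ε ≤ u.im} := isClosed_le continuous_const Complex.continuous_im
      have h3 : IsClosed {u : ℂ | u.im ≤ H} := isClosed_le Complex.continuous_im continuous_const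
      have hBeq : B = {u : ℂ | |u.re| ≤ R2} ∩ ({u | ε ≤ u.im} ∩ {u | u.im ≤ H}) := by
        ext u; simp [hBdef, and_assoc]
      rw [hBeq]; exact h1.inter (h2.inter h3)
    · rw [isBounded_iff_forall_norm_le]
      refine ⟨R2 + H, fun u hu => ?_⟩
      have h1 := Complex.norm_le_abs_re_add_abs_im u
      have h2 : |u.re| ≤ R2 := hu.1
      have h3 : |u.im| ≤ H := by
        rw [abs_of_pos (lt_of_lt_of_le hε hu.2.1)]; exact hu.2.2
      calc ‖u‖ ≤ |u.re| + |u.im| := h1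
        _ ≤ R2 + H := add_le_add h2 h3
  obtain ⟨t, hcov⟩ := hBc.elim_finite_subcover (fun v : ↥B => Metric.ball (v:ℂ) δ)
    (fun v => Metric.isOpen_ball)
    (fun u hu => Set.mem_iUnion.2 ⟨⟨u, hu⟩, Metric.mem_ball_self hδ0⟩)
  have E3 : ∀ᶠ N in atTop, ∀ v ∈ t, ‖eFun lam ν N (v:ℂ)‖ ≤ ε₁/2 := by
    rw [eventually_all_finset]
    intro v hv
    have hvi : 0 < (v:ℂ).im := lt_of_lt_of_le hε v.2.2.1
    have := eFun_tendsto lam ν hweak hvi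
    have hlt := this.eventually (gt_mem_nhds (show (0:ℝ) < ε₁/2 by positivity))
    filter_upwards [hlt] with N hN using hN.le
  filter_upwards [eventually_ge_atTop 1, hlam, E3] with N hN1 hNlam hNt
  apply csSup_le (eSet_nonempty lam ν N)
  rintro tv ⟨u, hu, rfl⟩
  set η := u.im with hηdef
  have hw2 : (0:ℝ) < η + 2 := by linarith
  have hwle : η^2/(η+2) ≤ η := by
    rw [div_le_iff₀ hw2]; nlinarith
  have hwpos : (0:ℝ) ≤ η^2/(η+2) := by positivity
  by_cases hsm : η ≤ ε
  · -- small imaginary part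
    have h1 : ‖eFun lam ν N u‖ ≤ 2 * η⁻¹ := abs_eFun_le lam ν N hu
    calc ‖eFun lam ν N u‖ * (η^2/(η+2)) ≤ (2 * η⁻¹) * (η^2/(η+2)) :=
          mul_le_mul_of_nonneg_right h1 hwpos
      _ = 2 * η / (η + 2) := by field_simp
      _ ≤ η := by rw [div_le_iff₀ hw2]; nlinarith
      _ ≤ ε := hsm
  push_neg at hsm
  by_cases hbig : H ≤ η
  · -- large imaginary part : moment bound with du = Du = η
    have hmom := abs_eFun_moment lam ν hN1 hu (R := R) (du := η) (Du := η) hR0.le hu hu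
      hNlam hae (fun y hy => le_trans (le_refl η) (abs_lb hu y)) (abs_pos_of_im u hu)
    calc ‖eFun lam ν N u‖ * (η^2/(η+2)) ≤ (2*R/(η*η)) * (η^2/(η+2)) :=
          mul_le_mul_of_nonneg_right hmom hwpos
      _ = 2*R/(η+2) := by field_simp
      _ ≤ 2*R/H := by
          apply div_le_div_of_nonneg_left (by positivity) hH0
          linarith
      _ ≤ ε := by
          rw [div_le_iff₀ hH0, hHdef]
          have h5 : ε * (2*R/ε) = 2*R := by field_simp
          nlinarith [h5]
  push_neg at hbig
  by_cases hre : R2 < |u.re|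
  · -- large real part : moment bound with du = R2 - R, Du = R2
    have hdu : (0:ℝ) < R2 - R := by rw [hR2R]; positivity
    have hd : ∀ y : ℝ, |y| ≤ R → R2 - R ≤ ‖u - (y:ℂ)‖ := by
      intro y hy
      have h1 : |u.re - y| ≤ ‖u - (y:ℂ)‖ := by
        have := Complex.abs_re_le_norm (u - (y:ℂ))
        simpa [Complex.sub_re] using this
      have h2 : R2 - R ≤ |u.re - y| := by
        cases' abs_le.1 hy with hy1 hy2
        cases' lt_or_ge u.re 0 with hs hs
        · rw [abs_of_neg hs] at hre
          rw [abs_sub_comm, abs_of_nonneg (by linarith)]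
          linarith
        · rw [abs_of_nonneg hs] at hre
          rw [abs_of_nonneg (by linarith)]
          linarith
      linarith
    have hD : R2 ≤ ‖u‖ := le_trans hre.le (Complex.abs_re_le_norm u)
    have hmom := abs_eFun_moment lam ν hN1 hu hR0.le hdu hR20 hNlam hae hd hD
    calc ‖eFun lam ν N u‖ * (η^2/(η+2))
        ≤ (2*R/((R2-R)*R2)) * (η^2/(η+2)) := mul_le_mul_of_nonneg_right hmom hwpos
      _ ≤ (2*R/((R2-R)*R2)) * H := by
          apply mul_le_mul_of_nonneg_left (le_trans hwle hbig.le) (by positivity)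
      _ ≤ ε := by
          have e1 : (R2 - R) = H := by rw [hR2R, hHdef]
          rw [e1]
          have e2 : 2*R/(H*R2)*H = 2*R/R2 := by
            field_simp
          rw [e2]
          have e3 : 2*R/R2 ≤ 2*R/H := div_le_div_of_nonneg_left (by positivity) hH0 hHR2
          have e4 : 2*R/H = ε := by
            rw [hHdef]
            field_simp
          linarith
  push_neg at hre
  -- u in the compact box: use the net
  have huB : u ∈ B := ⟨hre, hsm.le, hbig.le⟩
  obtain ⟨v, hvt, hball⟩ := Set.mem_iUnion₂.1 (hcov huB)
  have hvi : ε ≤ (v:ℂ).im := v.2.2.1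
  have hdist : ‖u - (v:ℂ)‖ < δ := by
    rw [← mem_ball_iff_norm]; exact hball
  have hlip := eFun_lipschitz lam ν N hε hsm.le hvi
  have h4 : ‖eFun lam ν N u‖ ≤ ε₁ := by
    have h5 := hNt v hvt
    have h5' : ‖eFun lam ν N (v:ℂ)‖ ≤ ε₁/2 := h5
    have h6 : ‖eFun lam ν N u‖ ≤ ‖eFun lam ν N (v:ℂ)‖ + ‖eFun lam ν N u - eFun lam ν N (v:ℂ)‖ := by
      have h8 := norm_add_le (eFun lam ν N u - eFun lam ν N (v:ℂ)) (eFun lam ν N (v:ℂ))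
      simp only [sub_add_cancel] at h8
      linarith
    have h9 : ‖eFun lam ν N u - eFun lam ν N (v:ℂ)‖ ≤ 2 * (ε^2)⁻¹ * δ :=
      le_trans hlip (mul_le_mul_of_nonneg_left hdist.le (by positivity))
    have h10 : 2 * (ε^2)⁻¹ * δ = ε₁/2 := by
      rw [hδdef]; field_simp; ring
    show ‖eFun lam ν N u‖ ≤ ε₁
    linarith
  calc ‖eFun lam ν N u‖ * (η^2/(η+2)) ≤ ε₁ * η := by
        apply mul_le_mul h4 hwle (by positivity) hε₁0.le
    _ ≤ ε₁ * H := mul_le_mul_of_nonneg_left hbig.le hε₁0.le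
    _ = ε := by rw [hε₁def]; field_simp

lemma beta_tendsto (lam : (N : ℕ) → Fin N → ℝ) (ν : Measure ℝ) [IsProbabilityMeasure ν]
    (hweak : ∀ f : BoundedContinuousFunction ℝ ℝ,
      Tendsto (fun N => (∑ i, f (lam N i)) / N) atTop (𝓝 (∫ x, f x ∂ν)))
    {R : ℝ} (hR1 : 1 ≤ R) (hae : ∀ᵐ x ∂ν, |x| ≤ R)
    (hlam : ∀ᶠ N in atTop, ∀ i, |lam N i| ≤ R) :
    Tendsto (betaSeq lam ν) atTop (𝓝 0) := by
  rw [Metric.tendsto_atTop]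
  intro ε hε
  set ε' : ℝ := min (ε/2) 1 with hε'def
  have hε'0 : 0 < ε' := by
    apply lt_min (by linarith) one_pos
  have hε'1 : ε' ≤ 1 := min_le_right _ _
  have hkey := beta_key lam ν hweak hR1 hae hlam hε'0 hε'1
  rw [eventually_atTop] at hkey
  obtain ⟨N₀, hN₀⟩ := hkey
  refine ⟨N₀, fun n hn => ?_⟩
  rw [Real.dist_eq, sub_zero, abs_of_nonneg (betaSeq_nonneg lam ν n)]
  calc betaSeq lam ν n ≤ ε' := hN₀ n hn
    _ ≤ ε/2 := min_le_left _ _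
    _ < ε := by linarith

lemma prod_inv_amgm {a b : ℝ} (ha : 0 < a) (hb : 0 < b) :
    (a*b)⁻¹ ≤ ((a^2)⁻¹ + (b^2)⁻¹)/2 := by
  rw [mul_inv, ← inv_pow, ← inv_pow]
  nlinarith [sq_nonneg (a⁻¹ - b⁻¹), inv_pos.2 ha, inv_pos.2 hb]

lemma wt_anti {a b : ℝ} (ha : 0 < a) (hab : a ≤ b) : (b+2)/b^2 ≤ (a+2)/a^2 := by
  have hb : 0 < b := lt_of_lt_of_le ha hab
  rw [div_le_div_iff₀ (by positivity) (by positivity)]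
  nlinarith [mul_le_mul_of_nonneg_right hab (mul_pos ha hb).le, pow_le_pow_left₀ ha.le hab 2]

lemma realA {η σ mN eim E A : ℝ} (hz : 0 < η) (hσ : 0 < σ) (hmN0 : 0 ≤ mN)
    (hmNη : mN*η ≤ 1) (hAid : (η+σ^2*mN)*A = mN + eim) (heim : eim ≤ E) (hE0 : 0 ≤ E) :
    A ≤ 1/(η^2+σ^2) + E/η := by
  have hXp : 0 < η + σ^2*mN := by positivity
  have hAeq : A = mN/(η + σ^2*mN) + eim/(η + σ^2*mN) := by
    rw [← add_div, eq_div_iff hXp.ne']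
    linarith
  have t1 : mN/(η + σ^2*mN) ≤ 1/(η^2+σ^2) := by
    rw [div_le_div_iff₀ hXp (by positivity)]
    nlinarith [mul_le_mul_of_nonneg_right hmNη hz.le]
  have t2 : eim/(η + σ^2*mN) ≤ E/η := by
    rcases le_or_gt 0 eim with hei | hei
    · have s1 : eim/(η + σ^2*mN) ≤ eim/η := by
        apply div_le_div_of_nonneg_left hei hz
        nlinarith
      have s2 : eim/η ≤ E/η := by
        apply (div_le_div_iff_of_pos_right hz).2 heim
      linarith
    · have s1 : eim/(η + σ^2*mN) ≤ 0 :=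
        div_nonpos_iff.2 (Or.inr ⟨hei.le, hXp.le⟩)
      have s2 : (0:ℝ) ≤ E/η := by positivity
      linarith
  rw [hAeq]
  linarith

lemma realB {η σ mP B : ℝ} (hz : 0 < η) (hσ : 0 < σ) (hmP0 : 0 ≤ mP)
    (hmPη : mP*η ≤ 1) (hBid : (η+σ^2*mP)*B = mP) : B ≤ 1/(η^2+σ^2) := by
  have hXp : 0 < η + σ^2*mP := by positivity
  have hBeq : B = mP/(η + σ^2*mP) := by
    rw [eq_div_iff hXp.ne']
    linarith
  rw [hBeq, div_le_div_iff₀ hXp (by positivity)]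
  nlinarith [mul_le_mul_of_nonneg_right hmPη hz.le]

lemma realFinal {η σ E β Δa X A B : ℝ} (hz : 0 < η) (hσ : 0 < σ) (hE0 : 0 ≤ E)
    (hβ0 : 0 ≤ β) (hΔa0 : 0 ≤ Δa) (hX0 : 0 ≤ X)
    (hA2 : A ≤ 1/(η^2+σ^2) + E/η) (hB2 : B ≤ 1/(η^2+σ^2))
    (hXlb : 1 - σ^2*((A+B)/2) ≤ X)
    (hE : E ≤ (η+2)/η^2*β) (habs : Δa*X = E) (hΔ2 : Δa ≤ 2/η) :
    Δa ≤ (2*(η^2+σ^2)*(η+2)/η^4 + 2*σ^2*(η^2+σ^2)*(η+2)/η^6)*β := by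
  have hXlb2 : (η^2/(η^2+σ^2)) - σ^2*E/(2*η) ≤ X := by
    have h6 : σ^2*((A+B)/2) ≤ σ^2 * ((1/(η^2+σ^2) + E/η + 1/(η^2+σ^2))/2) := by
      apply mul_le_mul_of_nonneg_left ?_ (by positivity)
      linarith
    have h7 : σ^2 * ((1/(η^2+σ^2) + E/η + 1/(η^2+σ^2))/2)
        = σ^2/(η^2+σ^2) + σ^2*E/(2*η) := by
      field_simp
      ring
    have h8 : 1 - σ^2/(η^2+σ^2) = η^2/(η^2+σ^2) := by
      field_simp
      ring
    linarith
  by_cases hc : σ^2*E/(2*η) ≤ η^2/(η^2+σ^2)/2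
  · have hX2 : η^2/(η^2+σ^2)/2 ≤ X := by linarith
    have hXpos : (0:ℝ) < X := lt_of_lt_of_le (by positivity) hX2
    have hΔeq : Δa = E / X := by
      rw [eq_div_iff hXpos.ne']
      exact habs
    have h1 : Δa ≤ E / (η^2/(η^2+σ^2)/2) := by
      rw [hΔeq]
      exact div_le_div_of_nonneg_left hE0 (by positivity) hX2
    have h2 : E / (η^2/(η^2+σ^2)/2) = 2*(η^2+σ^2)/η^2 * E := by
      field_simp
    have h3 : 2*(η^2+σ^2)/η^2 * E ≤ 2*(η^2+σ^2)/η^2 * ((η+2)/η^2 * β) :=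
      mul_le_mul_of_nonneg_left hE (by positivity)
    have h4 : 2*(η^2+σ^2)/η^2 * ((η+2)/η^2 * β) = (2*(η^2+σ^2)*(η+2)/η^4) * β := by
      field_simp
    have h5 : (0:ℝ) ≤ (2*σ^2*(η^2+σ^2)*(η+2)/η^6) * β := by positivity
    have h6 : (2*(η^2+σ^2)*(η+2)/η^4 + 2*σ^2*(η^2+σ^2)*(η+2)/η^6) * β
        = (2*(η^2+σ^2)*(η+2)/η^4) * β + (2*σ^2*(η^2+σ^2)*(η+2)/η^6) * β := by ring
    rw [h6]
    linarith
  · push_neg at hc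
    have h5 : η^3 < σ^2*(η^2+σ^2)*E := by
      rw [div_div, div_lt_div_iff₀ (by positivity) (by positivity)] at hc
      nlinarith [hc]
    have h6 : η^5 < σ^2*(η^2+σ^2)*(η+2)*β := by
      have hstep : σ^2*(η^2+σ^2)*E ≤ σ^2*(η^2+σ^2)*((η+2)/η^2*β) :=
        mul_le_mul_of_nonneg_left hE (by positivity)
      have h7 : η^3 < σ^2*(η^2+σ^2)*((η+2)/η^2*β) := lt_of_lt_of_le h5 hstep
      calc η^5 = η^3*η^2 := by ring
        _ < (σ^2*(η^2+σ^2)*((η+2)/η^2*β))*η^2 := mul_lt_mul_of_pos_right h7 (by positivity)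
        _ = σ^2*(η^2+σ^2)*(η+2)*β := by
            field_simp
    have h7 : 2/η ≤ (2*σ^2*(η^2+σ^2)*(η+2)/η^6)*β := by
      have he1 : (2*σ^2*(η^2+σ^2)*(η+2)/η^6)*β = 2*(σ^2*(η^2+σ^2)*(η+2)*β)/η^6 := by
        ring
      rw [he1, div_le_div_iff₀ (by positivity) (by positivity)]
      nlinarith [mul_le_mul_of_nonneg_right h6.le (by positivity : (0:ℝ) ≤ 2*η)]
    have h8 : (0:ℝ) ≤ (2*(η^2+σ^2)*(η+2)/η^4)*β := by positivity
    have h9 : (2*(η^2+σ^2)*(η+2)/η^4 + 2*σ^2*(η^2+σ^2)*(η+2)/η^6) * β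
        = (2*(η^2+σ^2)*(η+2)/η^4) * β + (2*σ^2*(η^2+σ^2)*(η+2)/η^6) * β := by ring
    rw [h9]
    linarith

lemma main_est (lam : (N : ℕ) → Fin N → ℝ) (ν : Measure ℝ) [IsProbabilityMeasure ν]
    (ρN' ρ : Measure ℝ) [IsProbabilityMeasure ρN'] [IsProbabilityMeasure ρ]
    {σ : ℝ} (hσ : 0 < σ) {N : ℕ} (hN1 : 1 ≤ N) {z : ℂ} (hz : 0 < z.im)
    (hsubN' : (∫ x, (z - (x : ℂ))⁻¹ ∂ρN')
        = (N : ℂ)⁻¹ * ∑ i, (z - (σ ^ 2 : ℂ) * (∫ x, (z - (x : ℂ))⁻¹ ∂ρN') - (lam N i : ℂ))⁻¹)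
    (hsub' : (∫ x, (z - (x : ℂ))⁻¹ ∂ρ)
        = ∫ x, (z - (σ ^ 2 : ℂ) * (∫ y, (z - (y : ℂ))⁻¹ ∂ρ) - (x : ℂ))⁻¹ ∂ν) :
    ‖(∫ x, (z - (x : ℂ))⁻¹ ∂ρN') - ∫ x, (z - (x : ℂ))⁻¹ ∂ρ‖
      ≤ (2*(z.im^2+σ^2)*(z.im+2)/z.im^4 + 2*σ^2*(z.im^2+σ^2)*(z.im+2)/z.im^6)
          * betaSeq lam ν N := by
  have hσc : (σ ^ 2 : ℂ) = ((σ^2 : ℝ) : ℂ) := by push_cast; ring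
  set η := z.im with hηdef
  set gN : ℂ := ∫ x, (z - (x : ℂ))⁻¹ ∂ρN' with hgNdef
  set g : ℂ := ∫ x, (z - (x : ℂ))⁻¹ ∂ρ with hgdef
  set wt : ℂ := z - (σ ^ 2 : ℂ) * gN with hwtdef
  set w : ℂ := z - (σ ^ 2 : ℂ) * g with hwdef
  set mN : ℝ := -gN.im with hmNdef
  set mP : ℝ := -g.im with hmPdef
  -- basic positivity facts
  have hmN0 : 0 ≤ mN := by
    rw [hmNdef]
    have := im_integral_nonpos ρN' hz
    rw [← hgNdef] at this
    linarith
  have hmP0 : 0 ≤ mP := by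
    rw [hmPdef]
    have := im_integral_nonpos ρ hz
    rw [← hgdef] at this
    linarith
  have hmNη : mN * η ≤ 1 := by
    have h1 : ‖gN‖ ≤ η⁻¹ := by rw [hgNdef]; exact norm_integral_inv_le ρN' hz
    have h2 : |gN.im| ≤ ‖gN‖ := Complex.abs_im_le_norm gN
    have h3 : mN ≤ η⁻¹ := by
      rw [hmNdef]
      calc -gN.im ≤ |gN.im| := neg_le_abs _
        _ ≤ η⁻¹ := le_trans h2 h1
    calc mN * η ≤ η⁻¹ * η := mul_le_mul_of_nonneg_right h3 hz.le
      _ = 1 := inv_mul_cancel₀ hz.ne'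
  have hmPη : mP * η ≤ 1 := by
    have h1 : ‖g‖ ≤ η⁻¹ := by rw [hgdef]; exact norm_integral_inv_le ρ hz
    have h2 : |g.im| ≤ ‖g‖ := Complex.abs_im_le_norm g
    have h3 : mP ≤ η⁻¹ := by
      rw [hmPdef]
      calc -g.im ≤ |g.im| := neg_le_abs _
        _ ≤ η⁻¹ := le_trans h2 h1
    calc mP * η ≤ η⁻¹ * η := mul_le_mul_of_nonneg_right h3 hz.le
      _ = 1 := inv_mul_cancel₀ hz.ne'
  have hmulim : ∀ c : ℂ, ((σ ^ 2 : ℂ) * c).im = σ^2 * c.im := by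
    intro c
    rw [hσc, Complex.mul_im, Complex.ofReal_re, Complex.ofReal_im]
    ring
  have hwtim : wt.im = η + σ^2 * mN := by
    rw [hwtdef, Complex.sub_im, hmulim gN, hmNdef]; ring
  have hwim : w.im = η + σ^2 * mP := by
    rw [hwdef, Complex.sub_im, hmulim g, hmPdef]; ring
  have hwt0 : 0 < wt.im := by rw [hwtim]; positivity
  have hw0 : 0 < w.im := by rw [hwim]; positivity
  have hwtη : η ≤ wt.im := by rw [hwtim]; nlinarith
  have hwη : η ≤ w.im := by rw [hwim]; nlinarith
  -- the error term
  set e : ℂ := eFun lam ν N wt with hedef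
  set E : ℝ := ‖e‖ with hEdef
  have hE0 : 0 ≤ E := norm_nonneg _
  set β : ℝ := betaSeq lam ν N with hβdef
  have hβ0 : 0 ≤ β := betaSeq_nonneg lam ν N
  have hE : E ≤ (η+2)/η^2 * β := by
    have h1 := eFun_le_beta lam ν N hwt0
    have h2 : (wt.im + 2)/wt.im^2 ≤ (η+2)/η^2 := wt_anti hz hwtη
    calc E ≤ (wt.im + 2)/wt.im^2 * β := h1
      _ ≤ (η+2)/η^2 * β := mul_le_mul_of_nonneg_right h2 hβ0
  -- integral quantities
  set A : ℝ := ∫ x, (Complex.normSq (wt - (x:ℂ)))⁻¹ ∂ν with hAdef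
  set B : ℝ := ∫ x, (Complex.normSq (w - (x:ℂ)))⁻¹ ∂ν with hBdef
  set K : ℂ := ∫ x, ((wt - (x:ℂ)) * (w - (x:ℂ)))⁻¹ ∂ν with hKdef
  -- relation: gN = e + ∫ (wt - x)⁻¹ dν
  have hgNe : gN = e + ∫ x, (wt - (x:ℂ))⁻¹ ∂ν := by
    have h1 : e = gN - ∫ x, (wt - (x:ℂ))⁻¹ ∂ν := by
      rw [hedef]
      unfold eFun
      rw [← hsubN']
    rw [h1]; ring
  have hgval : g = ∫ x, (w - (x:ℂ))⁻¹ ∂ν := hsub'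
  -- A identity
  have hAid : (η + σ^2*mN) * A = mN + e.im := by
    have h1 := im_integral ν hwt0
    rw [← hAdef] at h1
    have h2 : (∫ x, (wt - (x:ℂ))⁻¹ ∂ν) = gN - e := by rw [hgNe]; ring
    rw [h2, Complex.sub_im] at h1
    have h3 : gN.im = -mN := by rw [hmNdef]; ring
    rw [h3, hwtim] at h1
    linarith [h1]
  -- B identity
  have hBid : (η + σ^2*mP) * B = mP := by
    have h1 := im_integral ν hw0
    rw [← hBdef] at h1
    rw [← hgval] at h1
    have h3 : g.im = -mP := by rw [hmPdef]; ring
    rw [h3, hwim] at h1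
    linarith [h1]
  have hA0 : 0 ≤ A := by
    rw [hAdef]
    exact integral_nonneg (fun x => inv_nonneg.2 (Complex.normSq_nonneg _))
  have hB0 : 0 ≤ B := by
    rw [hBdef]
    exact integral_nonneg (fun x => inv_nonneg.2 (Complex.normSq_nonneg _))
  -- bound on K
  have hint1 := integrable_normSq_inv ν hwt0
  have hint2 := integrable_normSq_inv ν hw0
  have hKint : Integrable (fun x : ℝ => ((wt - (x:ℂ)) * (w - (x:ℂ)))⁻¹) ν :=
    integrable_of_bound ν
      (((continuous_const.sub Complex.continuous_ofReal).mul
        (continuous_const.sub Complex.continuous_ofReal)).inv₀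
        (fun x => mul_ne_zero (sub_ne hwt0 x) (sub_ne hw0 x)))
      (η⁻¹ * η⁻¹)
      (by
        intro x
        rw [norm_inv, norm_mul, mul_inv]
        exact mul_le_mul (inv_anti₀ hz (le_trans hwtη (abs_lb hwt0 x)))
          (inv_anti₀ hz (le_trans hwη (abs_lb hw0 x))) (by positivity) (by positivity))
  have hKb : ‖K‖ ≤ (A+B)/2 := by
    have hptw : ∀ x : ℝ, ‖((wt - (x:ℂ)) * (w - (x:ℂ)))⁻¹‖
        ≤ ((Complex.normSq (wt - (x:ℂ)))⁻¹ + (Complex.normSq (w - (x:ℂ)))⁻¹)/2 := by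
      intro x
      rw [norm_inv, norm_mul]
      have h1 : 0 < ‖wt - (x:ℂ)‖ := lt_of_lt_of_le hz (le_trans hwtη (abs_lb hwt0 x))
      have h2 : 0 < ‖w - (x:ℂ)‖ := lt_of_lt_of_le hz (le_trans hwη (abs_lb hw0 x))
      have h3 := prod_inv_amgm h1 h2
      rw [Complex.normSq_eq_norm_sq, Complex.normSq_eq_norm_sq]
      exact h3
    calc ‖K‖ ≤ ∫ x, ‖((wt - (x:ℂ)) * (w - (x:ℂ)))⁻¹‖ ∂ν := norm_integral_le_integral_norm _
      _ ≤ ∫ x, ((Complex.normSq (wt - (x:ℂ)))⁻¹ + (Complex.normSq (w - (x:ℂ)))⁻¹)/2 ∂ν :=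
          integral_mono hKint.norm ((hint1.add hint2).div_const 2) hptw
      _ = (A+B)/2 := by rw [integral_div, integral_add hint1 hint2]
  -- key identity
  have hwsubinv : ∀ x : ℝ, (wt - (x:ℂ))⁻¹ - (w - (x:ℂ))⁻¹
      = (w - wt) * ((wt - (x:ℂ)) * (w - (x:ℂ)))⁻¹ := by
    intro x
    rw [inv_sub_inv_eq (sub_ne hwt0 x) (sub_ne hw0 x)]
    congr 1
    ring
  have hdiff : gN - g = e + (w - wt) * K := by
    have h1 : (∫ x, (wt - (x:ℂ))⁻¹ ∂ν) - (∫ x, (w - (x:ℂ))⁻¹ ∂ν) = (w - wt) * K := by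
      rw [← integral_sub (integrable_inv ν hwt0) (integrable_inv ν hw0)]
      rw [integral_congr_ae (Eventually.of_forall hwsubinv)]
      rw [hKdef, ← integral_const_mul]
    have h2 : g = ∫ x, (w - (x:ℂ))⁻¹ ∂ν := hgval
    calc gN - g = (e + ∫ x, (wt - (x:ℂ))⁻¹ ∂ν) - ∫ x, (w - (x:ℂ))⁻¹ ∂ν := by rw [← hgNe, ← h2]
      _ = e + ((∫ x, (wt - (x:ℂ))⁻¹ ∂ν) - ∫ x, (w - (x:ℂ))⁻¹ ∂ν) := by ring
      _ = e + (w - wt) * K := by rw [h1]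
  have hwsub : w - wt = (σ^2:ℂ) * (gN - g) := by
    rw [hwdef, hwtdef]
    push_cast
    ring
  have hkey : (gN - g) * (1 - (σ^2:ℂ)*K) = e := by
    linear_combination hdiff + K * hwsub
  -- absolute values
  have habs : ‖gN - g‖ * ‖1 - (σ^2:ℂ)*K‖ = E := by
    rw [← norm_mul, hkey]
  have hΔa0 : (0:ℝ) ≤ ‖gN - g‖ := norm_nonneg _
  have hX0 : (0:ℝ) ≤ ‖1 - (σ^2:ℂ)*K‖ := norm_nonneg _
  have hXlb : 1 - σ^2*((A+B)/2) ≤ ‖1 - (σ^2:ℂ)*K‖ := by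
    have h1 : 1 - ‖(σ^2:ℂ)*K‖ ≤ ‖1 - (σ^2:ℂ)*K‖ := by
      have := norm_sub_norm_le (1:ℂ) ((σ^2:ℂ)*K)
      simpa using this
    have h2 : ‖(σ^2:ℂ)*K‖ = σ^2 * ‖K‖ := by
      rw [norm_mul, hσc]
      congr 1
      simp [abs_of_nonneg (sq_nonneg σ)]
    have h3 : σ^2*‖K‖ ≤ σ^2*((A+B)/2) := mul_le_mul_of_nonneg_left hKb (by positivity)
    linarith
  have hΔ2 : ‖gN - g‖ ≤ 2/η := by
    have h1 : ‖gN‖ ≤ η⁻¹ := by rw [hgNdef]; exact norm_integral_inv_le ρN' hz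
    have h2 : ‖g‖ ≤ η⁻¹ := by rw [hgdef]; exact norm_integral_inv_le ρ hz
    have h3 := norm_sub_le gN g
    have h4 : (2:ℝ)/η = η⁻¹ + η⁻¹ := by
      rw [div_eq_mul_inv]; ring
    linarith
  have hA2 : A ≤ 1/(η^2+σ^2) + E/η :=
    realA hz hσ hmN0 hmNη hAid (le_trans (le_abs_self _) (Complex.abs_im_le_norm e)) hE0
  have hB2 : B ≤ 1/(η^2+σ^2) := realB hz hσ hmP0 hmPη hBid
  exact realFinal hz hσ hE0 hβ0 hΔa0 hX0 hA2 hB2 hXlb hE habs hΔ2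

lemma realLast {η σ β c : ℝ} (hz : 0 < η) (hσ : 0 < σ) (hβ0 : 0 ≤ β) (hc : 0 ≤ c) :
    (2*(η^2+σ^2)*(η+2)/η^4 + 2*σ^2*(η^2+σ^2)*(η+2)/η^6)*β
      ≤ (2*η⁻¹ + 4*η⁻¹^2 + (4*σ^2)*η⁻¹^3 + (8*σ^2)*η⁻¹^4 + (2*σ^4)*η⁻¹^5 + (4*σ^4)*η⁻¹^6)*(β + c) := by
  have heq : 2*(η^2+σ^2)*(η+2)/η^4 + 2*σ^2*(η^2+σ^2)*(η+2)/η^6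
      = 2*η⁻¹ + 4*η⁻¹^2 + (4*σ^2)*η⁻¹^3 + (8*σ^2)*η⁻¹^4 + (2*σ^4)*η⁻¹^5 + (4*σ^4)*η⁻¹^6 := by
    field_simp
    ring
  rw [heq]
  apply mul_le_mul_of_nonneg_left (by linarith)
  positivity

end S15

set_option maxHeartbeats 1000000

/-- under Assumption A, if `g̃_N` (Stieltjes transform of `μ_σ ⊞ μ_{A_N}`) and
`g` (Stieltjes transform of `μ_σ ⊞ ν`) satisfy the semicircular subordination equations, then
`|g̃_N(z) − g(z)| ≤ T(|Im z|⁻¹)·b_N` on `ℂ⁺` with `T` of nonnegative coefficients and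
`b_N → 0`. -/
theorem statement15
    (A : (N : ℕ) → Matrix (Fin N) (Fin N) ℂ) (hAh : ∀ N, (A N).IsHermitian)
    (ν : Measure ℝ) [IsProbabilityMeasure ν] (hνc : IsCompact (msupport ν))
    (hweak : ∀ f : BoundedContinuousFunction ℝ ℝ,
      Tendsto (fun N => (∑ i, f (eigsDesc (A N) i)) / N) atTop (𝓝 (∫ x, f x ∂ν)))
    (r J : ℕ) (θ : Fin J → ℝ) (k : Fin J → ℕ)
    (hθ : StrictAnti θ) (hθsupp : ∀ j, θ j ∉ msupport ν)
    (hk : ∀ j, 1 ≤ k j) (hksum : ∑ j, k j = r)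
    (hmult : ∀ N, r ≤ N → ∀ j, {i : Fin N | eigsDesc (A N) i = θ j}.ncard = k j)
    (hbulk : ∀ ε > 0, ∀ᶠ N in atTop, ∀ i : Fin N,
      (∀ j, eigsDesc (A N) i ≠ θ j) → ∃ y ∈ msupport ν, |eigsDesc (A N) i - y| ≤ ε)
    (σ : ℝ) (hσ : 0 < σ)
    (ρN : ℕ → Measure ℝ) (hρN : ∀ N, IsProbabilityMeasure (ρN N))
    (hsubN : ∀ N, 1 ≤ N → ∀ z : ℂ, 0 < z.im →
      (∫ x, (z - (x : ℂ))⁻¹ ∂(ρN N))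
        = (N : ℂ)⁻¹ * ∑ i, (z - (σ ^ 2 : ℂ) * (∫ x, (z - (x : ℂ))⁻¹ ∂(ρN N))
            - (eigsDesc (A N) i : ℂ))⁻¹)
    (ρ : Measure ℝ) [IsProbabilityMeasure ρ]
    (hsub : ∀ z : ℂ, 0 < z.im →
      (∫ x, (z - (x : ℂ))⁻¹ ∂ρ)
        = ∫ x, (z - (σ ^ 2 : ℂ) * (∫ y, (z - (y : ℂ))⁻¹ ∂ρ) - (x : ℂ))⁻¹ ∂ν) :
    ∃ (T : Polynomial ℝ) (b : ℕ → ℝ), (∀ n, 0 ≤ T.coeff n) ∧ (∀ N, 0 < b N) ∧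
      Tendsto b atTop (𝓝 0) ∧
      ∀ (N : ℕ), 1 ≤ N → ∀ (z : ℂ), 0 < z.im →
        ‖(∫ x, (z - (x : ℂ))⁻¹ ∂(ρN N)) - ∫ x, (z - (x : ℂ))⁻¹ ∂ρ‖
          ≤ T.eval |z.im|⁻¹ * b N := by
  classical
  -- the eigenvalue array
  set lam : (N : ℕ) → Fin N → ℝ := fun N i => eigsDesc (A N) i with hlamdef
  have hweak' : ∀ f : BoundedContinuousFunction ℝ ℝ,
      Tendsto (fun N => (∑ i, f (lam N i)) / N) atTop (𝓝 (∫ x, f x ∂ν)) := hweak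
  -- a uniform bound R
  obtain ⟨C0, hC0⟩ := isBounded_iff_forall_norm_le.1 hνc.isBounded
  obtain ⟨Cθ, hCθ⟩ := Finite.exists_le (fun j : Fin J => |θ j|)
  set R : ℝ := max 1 (max C0 Cθ) + 1 with hRdef
  have hR1 : 1 ≤ R := by
    have := le_max_left 1 (max C0 Cθ)
    rw [hRdef]; linarith
  have hC0R : C0 + 1 ≤ R := by
    have h1 := le_max_left C0 Cθ
    have h2 := le_max_right 1 (max C0 Cθ)
    rw [hRdef]; linarith
  have hCθR : Cθ ≤ R := by
    have h1 := le_max_right C0 Cθ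
    have h2 := le_max_right 1 (max C0 Cθ)
    rw [hRdef]; linarith
  have hae : ∀ᵐ x ∂ν, |x| ≤ R := by
    apply S15.ae_bound_of_msupport ν
    intro y hy
    have := hC0 y hy
    rw [Real.norm_eq_abs] at this
    linarith
  have hlamEv : ∀ᶠ N in atTop, ∀ i, |lam N i| ≤ R := by
    filter_upwards [hbulk 1 one_pos] with N hN i
    by_cases hsp : ∃ j, lam N i = θ j
    · obtain ⟨j, hj⟩ := hsp
      rw [hj]
      exact le_trans (hCθ j) hCθR
    · push_neg at hsp
      obtain ⟨y, hy, hd⟩ := hN i hsp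
      have h1 : ‖y‖ ≤ C0 := hC0 y hy
      rw [Real.norm_eq_abs] at h1
      have h2 : |lam N i| ≤ |y| + |lam N i - y| := by
        have := abs_sub_abs_le_abs_sub (lam N i) y
        have h3 := abs_sub (lam N i) y
        calc |lam N i| = |y + (lam N i - y)| := by ring_nf
          _ ≤ |y| + |lam N i - y| := abs_add_le _ _
      linarith
  -- convergence of the error suprema
  have hβt := S15.beta_tendsto lam ν hweak' hR1 hae hlamEv
  -- the polynomial
  refine ⟨Polynomial.C 2 * Polynomial.X + Polynomial.C 4 * Polynomial.X^2
    + Polynomial.C (4*σ^2) * Polynomial.X^3 + Polynomial.C (8*σ^2) * Polynomial.X^4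
    + Polynomial.C (2*σ^4) * Polynomial.X^5 + Polynomial.C (4*σ^4) * Polynomial.X^6,
    fun N => S15.betaSeq lam ν N + ((N:ℝ)+1)⁻¹, ?_, ?_, ?_, ?_⟩
  · intro n
    simp only [Polynomial.coeff_add, Polynomial.coeff_C_mul, Polynomial.coeff_X_pow,
      Polynomial.coeff_X, mul_ite, mul_one, mul_zero]
    split_ifs <;> positivity
  · intro N
    have h1 := S15.betaSeq_nonneg lam ν N
    have h2 : (0:ℝ) < ((N:ℝ)+1)⁻¹ := by positivity
    linarith
  · have h2 : Tendsto (fun N : ℕ => ((N:ℝ)+1)⁻¹) atTop (𝓝 0) := by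
      have h3 : Tendsto (fun N : ℕ => ((N:ℝ)+1)) atTop atTop :=
        tendsto_atTop_add_const_right atTop 1 tendsto_natCast_atTop_atTop
      exact h3.inv_tendsto_atTop
    have := hβt.add h2
    simpa using this
  · intro N hN z hz
    haveI := hρN N
    have hmain := S15.main_est lam ν (ρN N) ρ hσ hN hz (hsubN N hN z hz) (hsub z hz)
    have habsim : |z.im| = z.im := abs_of_pos hz
    have heval : Polynomial.eval |z.im|⁻¹
        (Polynomial.C 2 * Polynomial.X + Polynomial.C 4 * Polynomial.X^2
          + Polynomial.C (4*σ^2) * Polynomial.X^3 + Polynomial.C (8*σ^2) * Polynomial.X^4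
          + Polynomial.C (2*σ^4) * Polynomial.X^5 + Polynomial.C (4*σ^4) * Polynomial.X^6)
        = 2*(z.im)⁻¹ + 4*(z.im)⁻¹^2 + (4*σ^2)*(z.im)⁻¹^3 + (8*σ^2)*(z.im)⁻¹^4
          + (2*σ^4)*(z.im)⁻¹^5 + (4*σ^4)*(z.im)⁻¹^6 := by
      rw [habsim]
      simp [Polynomial.eval_add, Polynomial.eval_mul, Polynomial.eval_pow]
    rw [heval]
    refine le_trans hmain ?_
    exact S15.realLast hz hσ (S15.betaSeq_nonneg lam ν N) (by positivity)
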